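/- Let A be a C*-algebra, K a closed essential ideal, and S, T semiregular operators on A with S|_K = T|_K (equal domains D(S) ∩ K = D(T) ∩ K and equal values there). Then S = T on D(S) ∩ D(T). -/
import Mathlib


/-- A densely defined operator on a C*-algebra `A`, presented by a total function `toFun`
whose meaningful values are those on its domain `dom`.  The domain is a dense right ideal,
on which the operator is `ℂ`-linear and right `A`-linear (`S(a b) = (S a) b`). -/
structure UnboundedOp (A : Type*) [NonUnitalCStarAlgebra A] where
  dom : Set A
  toFun : A → A
  dense_dom : Dense dom
  zero_mem : (0 : A) ∈ dom
  add_mem : ∀ a ∈ dom, ∀ b ∈ dom, a + b ∈ dom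
  smul_mem : ∀ (c : ℂ), ∀ a ∈ dom, c • a ∈ dom
  mul_mem : ∀ a ∈ dom, ∀ x : A, a * x ∈ dom
  map_add' : ∀ a ∈ dom, ∀ b ∈ dom, toFun (a + b) = toFun a + toFun b
  map_smul' : ∀ (c : ℂ), ∀ a ∈ dom, toFun (c • a) = c • toFun a
  map_mul' : ∀ a ∈ dom, ∀ x : A, toFun (a * x) = toFun a * x

namespace UnboundedOp

variable {A : Type*} [NonUnitalCStarAlgebra A]

/-- The domain of the adjoint of `S`, with respect to the `A`-valued inner
product `⟨a, b⟩ = a* b` on `A`: those `a` admitting `c` with `⟨c, b⟩ = ⟨a, S b⟩`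
for all `b` in the domain of `S`. -/
def adjDom (S : UnboundedOp A) : Set A :=
  {a : A | ∃ c : A, ∀ b ∈ S.dom, star a * S.toFun b = star c * b}

/-- `S` is semiregular if (it is closable, which is automatic here, and) its
adjoint is densely defined. -/
def Semiregular (S : UnboundedOp A) : Prop := Dense S.adjDom

/-- `S` is a closed operator if its graph is closed. -/
def IsClosedOp (S : UnboundedOp A) : Prop :=
  IsClosed {p : A × A | p.1 ∈ S.dom ∧ p.2 = S.toFun p.1}

end UnboundedOp

/-- An ideal `K` of `A` is essential if it has trivial annihilator. -/
def TwoSidedIdeal.Essential {A : Type*} [NonUnitalCStarAlgebra A] (K : TwoSidedIdeal A) : Prop :=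
  ∀ a : A, (∀ k ∈ K, a * k = 0) → a = 0

/-- If two semiregular operators `S`, `T` on `A` have the same restriction to a closed
essential ideal `K`, then `S = T` on `D(S) ∩ D(T)`. -/
theorem stmt_6 {A : Type*} [NonUnitalCStarAlgebra A]
    (K : TwoSidedIdeal A) (hKc : IsClosed (K : Set A)) (hKe : K.Essential)
    (S T : UnboundedOp A) (hS : S.Semiregular) (hT : T.Semiregular)
    (hdom : S.dom ∩ (K : Set A) = T.dom ∩ (K : Set A))
    (hval : ∀ a ∈ S.dom ∩ (K : Set A), S.toFun a = T.toFun a) :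
    ∀ a ∈ S.dom ∩ T.dom, S.toFun a = T.toFun a := by
  rintro a ⟨haS, haT⟩
  have key : ∀ k ∈ K, (S.toFun a - T.toFun a) * k = 0 := by
    intro k hk
    have hakK : a * k ∈ (K : Set A) := K.mul_mem_left a k hk
    have hakS : a * k ∈ S.dom := S.mul_mem a haS k
    have h1 : S.toFun (a * k) = T.toFun (a * k) := hval _ ⟨hakS, hakK⟩
    have h2 : S.toFun (a * k) = S.toFun a * k := S.map_mul' a haS k
    have h3 : T.toFun (a * k) = T.toFun a * k := T.map_mul' a haT k
    rw [sub_mul, ← h2, ← h3, h1, sub_self]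
  exact sub_eq_zero.mp (hKe _ key)
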